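/- For all real a with 2 ≤ a ≤ 3 and all real x ≥ t > 0, one has (x + 2t/a)^a ≥ x^a + t·x^(a-1) + (2t²/a)·x^(a-2). -/

import Mathlib

theorem stmt_5 (a x t : ℝ) (ha2 : 2 ≤ a) (ha3 : a ≤ 3) (ht : 0 < t) (hxt : t ≤ x) :
    x ^ a + t * x ^ (a - 1) + 2 * t ^ 2 / a * x ^ (a - 2) ≤ (x + 2 * t / a) ^ a := by
  have hx : 0 < x := lt_of_lt_of_le ht hxt
  have ha0 : (0:ℝ) < a := by linarith
  set s : ℝ := (2 * t / a) / x with hs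
  have hs0 : 0 ≤ s := by positivity
  have hbern : 1 + a * s ≤ (1 + s) ^ a :=
    one_add_mul_self_le_rpow_one_add (by linarith) (by linarith)
  have hx1 : x + 2 * t / a = x * (1 + s) := by
    rw [hs]; field_simp
  have key : x ^ a * (1 + a * s) ≤ (x + 2 * t / a) ^ a := by
    rw [hx1, Real.mul_rpow hx.le (by linarith)]
    exact mul_le_mul_of_nonneg_left hbern (Real.rpow_nonneg hx.le a)
  have hxas : x ^ a * (a * s) = 2 * t * x ^ (a - 1) := by
    have h1 : x ^ a = x ^ (a - 1) * x := by
      rw [← Real.rpow_add_one hx.ne' (a - 1)]; ring_nf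
    rw [h1, hs]
    field_simp
  have h2 : 2 * t ^ 2 / a * x ^ (a - 2) ≤ t * x ^ (a - 1) := by
    have h3 : x ^ (a - 1) = x ^ (a - 2) * x := by
      rw [← Real.rpow_add_one hx.ne' (a - 2)]; ring_nf
    rw [h3]
    have hxp : (0:ℝ) ≤ x ^ (a - 2) := Real.rpow_nonneg hx.le _
    have h4 : 2 * t ^ 2 / a ≤ t * x := by
      have : 2 * t / a ≤ t := by
        rw [div_le_iff₀ ha0]; nlinarith
      calc 2 * t ^ 2 / a = (2 * t / a) * t := by ring
        _ ≤ t * t := by nlinarith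
        _ ≤ t * x := by nlinarith
    calc 2 * t ^ 2 / a * x ^ (a - 2) ≤ (t * x) * x ^ (a - 2) := by
          apply mul_le_mul_of_nonneg_right h4 hxp
      _ = t * (x ^ (a - 2) * x) := by ring
  have : x ^ a + t * x ^ (a - 1) + 2 * t ^ 2 / a * x ^ (a - 2)
      ≤ x ^ a * (1 + a * s) := by
    rw [mul_add, mul_one, hxas]; linarith
  linarith
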